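/- If B is Δ_b-n-bidemocratic, then: (i) B is Δ_s-n-superdemocratic with Δ_s ≤ Δ_b; (ii) B is Δ-n-symmetric for largest coefficients with Δ ≤ 1 + 2Δ_b; (iii) B has the n-UL property with constants C₁, C₂ ≤ Δ_b. -/

import Mathlib

open Finset

-- convexity lemma
theorem exists_signs {X : Type*} [NormedAddCommGroup X] [NormedSpace ℝ X]
    (e : ℕ → X) (s : Finset ℕ) :
    ∀ (x : X) (a : ℕ → ℝ), (∀ i ∈ s, |a i| ≤ 1) →
    ∃ ε : ℕ → ℝ, (∀ i ∈ s, |ε i| = 1) ∧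
      ‖x + ∑ i ∈ s, a i • e i‖ ≤ ‖x + ∑ i ∈ s, ε i • e i‖ := by
  induction s using Finset.induction_on with
  | empty => intro x a _; exact ⟨fun _ => 1, by simp, le_refl _⟩
  | insert _ _ hj ih =>
    rename_i j t
    intro x a ha
    obtain ⟨ε, hε, hle⟩ := ih (x + a j • e j) a (fun i hi => ha i (Finset.mem_insert_of_mem hi))
    set y := x + ∑ i ∈ t, ε i • e i with hy
    have haj : |a j| ≤ 1 := ha j (Finset.mem_insert_self j t)
    have seg : ‖y + a j • e j‖ ≤ max ‖y + e j‖ ‖y - e j‖ := by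
      have hrep : y + a j • e j = ((a j + 1)/2) • (y + e j) + ((1 - a j)/2) • (y - e j) := by
        module
      have h1 : (0:ℝ) ≤ (a j + 1)/2 := by
        rw [abs_le] at haj; linarith
      have h2 : (0:ℝ) ≤ (1 - a j)/2 := by
        rw [abs_le] at haj; linarith
      calc ‖y + a j • e j‖ ≤ ((a j + 1)/2) * ‖y + e j‖ + ((1 - a j)/2) * ‖y - e j‖ := by
            rw [hrep]
            refine le_trans (norm_add_le _ _) ?_
            rw [norm_smul, norm_smul, Real.norm_eq_abs, Real.norm_eq_abs,
              abs_of_nonneg h1, abs_of_nonneg h2]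
        _ ≤ ((a j + 1)/2) * max ‖y + e j‖ ‖y - e j‖ + ((1 - a j)/2) * max ‖y + e j‖ ‖y - e j‖ := by
            gcongr
            · exact le_max_left _ _
            · exact le_max_right _ _
        _ = max ‖y + e j‖ ‖y - e j‖ := by ring
    by_cases hc : ‖y - e j‖ ≤ ‖y + e j‖
    · refine ⟨Function.update ε j 1, ?_, ?_⟩
      · intro i hi
        rcases Finset.mem_insert.1 hi with rfl | hi
        · simp
        · rw [Function.update_of_ne (ne_of_mem_of_not_mem hi hj)]; exact hε i hi
      · rw [Finset.sum_insert hj, Finset.sum_insert hj]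
        have hsum : ∑ i ∈ t, Function.update ε j 1 i • e i = ∑ i ∈ t, ε i • e i :=
          Finset.sum_congr rfl fun i hi => by
            rw [Function.update_of_ne (ne_of_mem_of_not_mem hi hj)]
        rw [hsum, Function.update_self]
        calc ‖x + (a j • e j + ∑ i ∈ t, a i • e i)‖
            = ‖(x + a j • e j) + ∑ i ∈ t, a i • e i‖ := by rw [add_assoc]
          _ ≤ ‖y + a j • e j‖ := by
              have : (x + a j • e j) + ∑ i ∈ t, ε i • e i = y + a j • e j := by
                rw [hy]; abel
              rw [← this]; exact hle
          _ ≤ ‖y + e j‖ := le_trans seg (by rw [max_eq_left hc])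
          _ = ‖x + ((1:ℝ) • e j + ∑ i ∈ t, ε i • e i)‖ := by
              rw [one_smul, hy]; congr 1; abel
    · refine ⟨Function.update ε j (-1), ?_, ?_⟩
      · intro i hi
        rcases Finset.mem_insert.1 hi with rfl | hi
        · simp
        · rw [Function.update_of_ne (ne_of_mem_of_not_mem hi hj)]; exact hε i hi
      · rw [Finset.sum_insert hj, Finset.sum_insert hj]
        have hsum : ∑ i ∈ t, Function.update ε j (-1) i • e i = ∑ i ∈ t, ε i • e i :=
          Finset.sum_congr rfl fun i hi => by
            rw [Function.update_of_ne (ne_of_mem_of_not_mem hi hj)]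
        rw [hsum, Function.update_self]
        calc ‖x + (a j • e j + ∑ i ∈ t, a i • e i)‖
            = ‖(x + a j • e j) + ∑ i ∈ t, a i • e i‖ := by rw [add_assoc]
          _ ≤ ‖y + a j • e j‖ := by
              have : (x + a j • e j) + ∑ i ∈ t, ε i • e i = y + a j • e j := by
                rw [hy]; abel
              rw [← this]; exact hle
          _ ≤ ‖y - e j‖ := le_trans seg (by rw [max_eq_right (le_of_not_ge hc)])
          _ = ‖x + ((-1:ℝ) • e j + ∑ i ∈ t, ε i • e i)‖ := by
              rw [neg_smul, one_smul, hy]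
              congr 1; abel

/-- If `B` is `Δb`-`n`-bidemocratic (pairwise form), then: (i) it is
`n`-superdemocratic with constant ≤ Δb; (ii) it is `n`-symmetric for largest coefficients
with constant ≤ 1 + 2Δb; (iii) it has the `n`-UL property with constants ≤ Δb. -/

theorem stmt12
    {X : Type*} [NormedAddCommGroup X] [NormedSpace ℝ X]
    (e : ℕ → X) (f : ℕ → X →L[ℝ] ℝ)
    (hbi : ∀ i j, f i (e j) = if i = j then (1 : ℝ) else 0)
    (α₁ α₂ : ℝ) (hα₁pos : 0 < α₁) (hα₂pos : 0 < α₂)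
    (hα₁ : ∀ i, ‖e i‖ ≤ α₁) (hα₂ : ∀ i, ‖f i‖ ≤ α₂)
    (nseq : ℕ → ℕ) (hmono : StrictMono nseq) (hn1 : 0 < nseq 0)
    (Δb : ℝ) (hΔb : 0 < Δb)
    (hbidem : ∀ (k : ℕ) (A B : Finset ℕ) (ε ε' : ℕ → ℝ),
      A.card ≤ nseq k → B.card ≤ nseq k →
      (∀ i ∈ A, |ε i| = 1) → (∀ i ∈ B, |ε' i| = 1) →
      ‖∑ i ∈ A, ε i • e i‖ * ‖∑ i ∈ B, ε' i • f i‖ ≤ Δb * (nseq k : ℝ)) :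
    -- (i) n-superdemocracy with constant Δb
    (∀ (A B : Finset ℕ) (εA εB : ℕ → ℝ),
      A.card ≤ B.card → (∃ k, A.card = nseq k) → (∃ k, B.card = nseq k) →
      (∀ i ∈ A, |εA i| = 1) → (∀ i ∈ B, |εB i| = 1) →
      ‖∑ i ∈ A, εA i • e i‖ ≤ Δb * ‖∑ i ∈ B, εB i • e i‖) ∧
    -- (ii) n-symmetry for largest coefficients with constant 1 + 2Δb
    (∀ (A B : Finset ℕ) (εA εB : ℕ → ℝ) (x : X),
      A.card ≤ B.card → (∃ k, A.card = nseq k) → (∃ k, B.card = nseq k) →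
      Disjoint A B →
      (∀ i ∈ A, |εA i| = 1) → (∀ i ∈ B, |εB i| = 1) →
      (∀ i, |f i x| ≤ 1) → (∀ i ∈ A ∪ B, f i x = 0) →
      ‖x + ∑ i ∈ A, εA i • e i‖ ≤ (1 + 2 * Δb) * ‖x + ∑ i ∈ B, εB i • e i‖) ∧
    -- (iii) the n-UL property with constants Δb, Δb
    (∀ (A : Finset ℕ) (hA : A.Nonempty) (a : ℕ → ℝ), (∃ k, A.card = nseq k) →
      Δb⁻¹ * (A.inf' hA fun i => |a i|) * ‖∑ i ∈ A, e i‖ ≤ ‖∑ i ∈ A, a i • e i‖ ∧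
      ‖∑ i ∈ A, a i • e i‖ ≤ Δb * (A.sup' hA fun i => |a i|) * ‖∑ i ∈ A, e i‖) := by
  -- evaluation of sign functionals on sums
  have heval : ∀ (B : Finset ℕ) (ε a : ℕ → ℝ),
      (∑ i ∈ B, ε i • f i) (∑ j ∈ B, a j • e j) = ∑ i ∈ B, ε i * a i := by
    intro B ε a
    rw [ContinuousLinearMap.sum_apply]
    refine Finset.sum_congr rfl fun i hi => ?_
    rw [ContinuousLinearMap.smul_apply, map_sum]
    have : ∀ j ∈ B, (f i) (a j • e j) = if i = j then a j else 0 := by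
      intro j hj
      rw [map_smul, hbi, smul_eq_mul]
      split <;> simp
    rw [Finset.sum_congr rfl this, Finset.sum_ite_eq B i a, if_pos hi, smul_eq_mul]
  have hsq : ∀ (B : Finset ℕ) (ε : ℕ → ℝ), (∀ i ∈ B, |ε i| = 1) →
      ∑ i ∈ B, ε i * ε i = (B.card : ℝ) := by
    intro B ε hε
    rw [Finset.sum_congr rfl (fun i hi => by
      have := hε i hi
      have h2 : ε i * ε i = |ε i| * |ε i| := (abs_mul_abs_self _).symm
      rw [h2, this, one_mul] : ∀ i ∈ B, ε i * ε i = (1:ℝ)), Finset.sum_const, nsmul_eq_mul, mul_one]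
  -- key lemma
  have key : ∀ (k : ℕ) (A B : Finset ℕ) (εA εB : ℕ → ℝ) (x : X),
      A.card ≤ nseq k → B.card = nseq k →
      (∀ i ∈ A, |εA i| = 1) → (∀ i ∈ B, |εB i| = 1) →
      (∀ i ∈ B, f i x = 0) →
      ‖∑ i ∈ A, εA i • e i‖ ≤ Δb * ‖x + ∑ i ∈ B, εB i • e i‖ := by
    intro k A B εA εB x hAc hBc hεA hεB hx
    set G : X →L[ℝ] ℝ := ∑ i ∈ B, εB i • f i with hG
    have hGval : G (x + ∑ i ∈ B, εB i • e i) = (B.card : ℝ) := by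
      rw [map_add, heval B εB εB, hsq B εB hεB]
      have : G x = 0 := by
        rw [hG, ContinuousLinearMap.sum_apply]
        exact Finset.sum_eq_zero fun i hi => by
          rw [ContinuousLinearMap.smul_apply, hx i hi, smul_zero]
      rw [this, zero_add]
    have hnpos : 0 < (nseq k : ℝ) := by
      exact_mod_cast lt_of_lt_of_le hn1 (hmono.monotone (Nat.zero_le k))
    have hle : (B.card : ℝ) ≤ ‖G‖ * ‖x + ∑ i ∈ B, εB i • e i‖ := by
      calc (B.card : ℝ) = G (x + ∑ i ∈ B, εB i • e i) := hGval.symm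
        _ ≤ ‖G (x + ∑ i ∈ B, εB i • e i)‖ := le_abs_self _
        _ ≤ ‖G‖ * ‖x + ∑ i ∈ B, εB i • e i‖ := G.le_opNorm _
    rw [hBc] at hle
    have hGpos : 0 < ‖G‖ := by
      by_contra h
      push_neg at h
      nlinarith [norm_nonneg (x + ∑ i ∈ B, εB i • e i)]
    have hb := hbidem k A B εA εB hAc (le_of_eq hBc) hεA hεB
    rw [← hG] at hb
    nlinarith [norm_nonneg (∑ i ∈ A, εA i • e i)]
  have hsuper : ∀ (A B : Finset ℕ) (εA εB : ℕ → ℝ),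
      A.card ≤ B.card → (∃ k, A.card = nseq k) → (∃ k, B.card = nseq k) →
      (∀ i ∈ A, |εA i| = 1) → (∀ i ∈ B, |εB i| = 1) →
      ‖∑ i ∈ A, εA i • e i‖ ≤ Δb * ‖∑ i ∈ B, εB i • e i‖ := by
    intro A B εA εB hAB _ ⟨k, hB⟩ hεA hεB
    have := key k A B εA εB 0 (hB ▸ hAB) hB hεA hεB (fun i _ => map_zero (f i))
    rwa [zero_add] at this
  refine ⟨hsuper, ?_, ?_⟩
  · -- (ii)
    intro A B εA εB x hAB hkA ⟨k, hB⟩ hdisj hεA hεB hx1 hx0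
    have hfxB : ∀ i ∈ B, f i x = 0 := fun i hi => hx0 i (Finset.mem_union_right _ hi)
    have h1 : ‖∑ i ∈ A, εA i • e i‖ ≤ Δb * ‖x + ∑ i ∈ B, εB i • e i‖ :=
      key k A B εA εB x (hB ▸ hAB) hB hεA hεB hfxB
    have h2 : ‖∑ i ∈ B, εB i • e i‖ ≤ Δb * ‖x + ∑ i ∈ B, εB i • e i‖ :=
      key k B B εB εB x (le_of_eq hB) hB hεB hεB hfxB
    have htri : ‖x + ∑ i ∈ A, εA i • e i‖ ≤
        ‖x + ∑ i ∈ B, εB i • e i‖ + ‖∑ i ∈ B, εB i • e i‖ + ‖∑ i ∈ A, εA i • e i‖ := by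
      have : x + ∑ i ∈ A, εA i • e i =
          (x + ∑ i ∈ B, εB i • e i) + (-(∑ i ∈ B, εB i • e i)) + ∑ i ∈ A, εA i • e i := by abel
      rw [this]
      refine le_trans (norm_add_le _ _) ?_
      gcongr
      refine le_trans (norm_add_le _ _) ?_
      rw [norm_neg]
    linarith
  · -- (iii)
    rintro A hA a ⟨k, hAc⟩
    have hnpos : 0 < (nseq k : ℝ) := by
      exact_mod_cast lt_of_lt_of_le hn1 (hmono.monotone (Nat.zero_le k))
    have h1A : ∀ i ∈ A, |(1:ℝ)| = 1 := fun _ _ => abs_one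
    have h1e : ∑ i ∈ A, (1:ℝ) • e i = ∑ i ∈ A, e i := by simp
    constructor
    · -- lower
      set m := A.inf' hA fun i => |a i| with hm
      have hm0 : 0 ≤ m := Finset.le_inf' hA _ fun i _ => abs_nonneg _
      set ε : ℕ → ℝ := fun i => if 0 ≤ a i then 1 else -1 with hε
      have hεabs : ∀ i ∈ A, |ε i| = 1 := by
        intro i _; by_cases h : 0 ≤ a i <;> simp [hε, h]
      set G : X →L[ℝ] ℝ := ∑ i ∈ A, ε i • f i with hG
      have hGa : G (∑ j ∈ A, a j • e j) = ∑ i ∈ A, |a i| := by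
        rw [hG, heval]
        refine Finset.sum_congr rfl fun i _ => ?_
        by_cases h : 0 ≤ a i
        · simp [hε, h, abs_of_nonneg h]
        · simp [hε, h, abs_of_neg (lt_of_not_ge h)]
      have hGε : G (∑ j ∈ A, ε j • e j) = (A.card : ℝ) := by
        rw [hG, heval, hsq A ε hεabs]
      have hGpos : 0 < ‖G‖ := by
        by_contra h
        push_neg at h
        have h2 : (A.card : ℝ) ≤ ‖G‖ * ‖∑ j ∈ A, ε j • e j‖ := by
          calc (A.card : ℝ) = G (∑ j ∈ A, ε j • e j) := hGε.symm
            _ ≤ ‖G (∑ j ∈ A, ε j • e j)‖ := le_abs_self _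
            _ ≤ _ := G.le_opNorm _
        rw [hAc] at h2
        nlinarith [norm_nonneg (∑ j ∈ A, ε j • e j)]
      have hsum : m * (nseq k : ℝ) ≤ ∑ i ∈ A, |a i| := by
        calc m * (nseq k : ℝ) = ∑ _i ∈ A, m := by
              rw [Finset.sum_const, nsmul_eq_mul, ← hAc]; ring
          _ ≤ ∑ i ∈ A, |a i| :=
              Finset.sum_le_sum fun i hi => Finset.inf'_le _ hi
      have hlow : m * (nseq k : ℝ) ≤ ‖G‖ * ‖∑ i ∈ A, a i • e i‖ := by
        refine le_trans hsum ?_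
        calc ∑ i ∈ A, |a i| = G (∑ j ∈ A, a j • e j) := hGa.symm
          _ ≤ ‖G (∑ j ∈ A, a j • e j)‖ := le_abs_self _
          _ ≤ _ := G.le_opNorm _
      have hbd := hbidem k A A (fun _ => 1) ε (le_of_eq hAc) (le_of_eq hAc) h1A hεabs
      rw [h1e, ← hG] at hbd
      have key2 : m * ‖∑ i ∈ A, e i‖ ≤ Δb * ‖∑ i ∈ A, a i • e i‖ := by
        refine le_of_mul_le_mul_right ?_ hGpos
        calc m * ‖∑ i ∈ A, e i‖ * ‖G‖ = m * (‖∑ i ∈ A, e i‖ * ‖G‖) := by ring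
          _ ≤ m * (Δb * (nseq k : ℝ)) := mul_le_mul_of_nonneg_left hbd hm0
          _ = Δb * (m * (nseq k : ℝ)) := by ring
          _ ≤ Δb * (‖G‖ * ‖∑ i ∈ A, a i • e i‖) := mul_le_mul_of_nonneg_left hlow (le_of_lt hΔb)
          _ = Δb * ‖∑ i ∈ A, a i • e i‖ * ‖G‖ := by ring
      calc Δb⁻¹ * m * ‖∑ i ∈ A, e i‖ = Δb⁻¹ * (m * ‖∑ i ∈ A, e i‖) := by ring
        _ ≤ Δb⁻¹ * (Δb * ‖∑ i ∈ A, a i • e i‖) :=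
            mul_le_mul_of_nonneg_left key2 (inv_nonneg.2 hΔb.le)
        _ = ‖∑ i ∈ A, a i • e i‖ := by field_simp
    · -- upper
      set M := A.sup' hA fun i => |a i| with hM
      have hM0 : 0 ≤ M := le_trans (abs_nonneg (a hA.choose)) (Finset.le_sup' (fun i => |a i|) hA.choose_spec)
      rcases eq_or_lt_of_le hM0 with hMz | hMpos
      · have : ∀ i ∈ A, a i = 0 := by
          intro i hi
          have := Finset.le_sup' (fun i => |a i|) hi
          rw [← hM, ← hMz] at this
          exact abs_eq_zero.1 (le_antisymm this (abs_nonneg _))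
        rw [Finset.sum_congr rfl (fun i hi => by rw [this i hi, zero_smul] :
          ∀ i ∈ A, a i • e i = (0:X))]
        rw [Finset.sum_const, smul_zero, norm_zero, ← hMz]
        positivity
      · set b : ℕ → ℝ := fun i => a i / M with hb
        have hble : ∀ i ∈ A, |b i| ≤ 1 := by
          intro i hi
          rw [hb, abs_div, abs_of_pos hMpos, div_le_one hMpos]
          exact Finset.le_sup' (fun i => |a i|) hi
        obtain ⟨ε, hεabs, hεle⟩ := exists_signs e A 0 b hble
        rw [zero_add, zero_add] at hεle
        have hrw : ∑ i ∈ A, a i • e i = M • ∑ i ∈ A, b i • e i := by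
          rw [Finset.smul_sum]
          refine Finset.sum_congr rfl fun i _ => ?_
          rw [smul_smul, hb]
          congr 1
          field_simp
        have hsup := hsuper A A ε (fun _ => 1) le_rfl ⟨k, hAc⟩ ⟨k, hAc⟩ hεabs h1A
        rw [h1e] at hsup
        calc ‖∑ i ∈ A, a i • e i‖ = M * ‖∑ i ∈ A, b i • e i‖ := by
              rw [hrw, norm_smul, Real.norm_eq_abs, abs_of_pos hMpos]
          _ ≤ M * ‖∑ i ∈ A, ε i • e i‖ := by gcongr
          _ ≤ M * (Δb * ‖∑ i ∈ A, e i‖) := by gcongr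
          _ = Δb * M * ‖∑ i ∈ A, e i‖ := by ring
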